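/- Let n ≥ 1, let u > 0 be a real number, p ∈ ℝⁿ, and let H be a symmetric positive semidefinite n×n real matrix. For t ≥ 0 define q(t) = √(u² + t²), w̃(t) = √(u² + t² + |p|²), the symmetric matrix γ̃(t) = I − p·pᵀ/(w̃(t)·(q(t) + w̃(t))), and the symmetric matrix a(t) = (q(t)/w̃(t))·γ̃(t)·H·γ̃(t). Then for every 1 ≤ k ≤ n, the function t ↦ σ_k(λ(a(t))) is nondecreasing on [0, ∞), where λ(a(t)) denotes the n-tuple of eigenvalues (with multiplicity) of a(t). -/

import Mathlib

open Matrix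

/-- The `k`-th elementary symmetric polynomial of `l : Fin n → ℝ`. -/
noncomputable def esymm (n k : ℕ) (l : Fin n → ℝ) : ℝ :=
  ∑ s ∈ Finset.powersetCard k (Finset.univ : Finset (Fin n)), ∏ i ∈ s, l i

open Polynomial in
/-- The auxiliary polynomial `det (X • 1 + A)`. -/
noncomputable def dpoly (n : ℕ) (A : Matrix (Fin n) (Fin n) ℝ) : Polynomial ℝ :=
  ((X : ℝ[X]) • (1 : Matrix (Fin n) (Fin n) ℝ[X]) + A.map C).det

open Polynomial in
/-- `AB` and `BA` have the same auxiliary polynomial. -/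
theorem dpoly_mul_comm (n : ℕ) (M N : Matrix (Fin n) (Fin n) ℝ) :
    dpoly n (M * N) = dpoly n (N * M) := by
  set R := (Polynomial ℝ)
  set M' : Matrix (Fin n) (Fin n) R := M.map C with hM'
  set N' : Matrix (Fin n) (Fin n) R := N.map C with hN'
  set U : Matrix (Fin n ⊕ Fin n) (Fin n ⊕ Fin n) R :=
    fromBlocks ((X : R) • 1) M' (-N') 1 with hU
  set V : Matrix (Fin n ⊕ Fin n) (Fin n ⊕ Fin n) R :=
    fromBlocks 1 0 N' ((X : R) • 1) with hV
  have hUV : U * V = fromBlocks ((X : R) • 1 + M' * N') ((X : R) • M') 0 ((X : R) • 1) := by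
    rw [hU, hV, fromBlocks_multiply]
    congr 1 <;> simp [Matrix.smul_mul, Matrix.mul_smul, add_comm]
    exact add_neg_cancel N'
  have hVU : V * U = fromBlocks ((X : R) • 1) M' 0 ((X : R) • 1 + N' * M') := by
    rw [hU, hV, fromBlocks_multiply]
    congr 1 <;> simp [Matrix.smul_mul, Matrix.mul_smul, add_comm]
    exact (smul_add (X : R) N' (-N')).symm.trans
      ((congrArg (fun Y => (X : R) • Y) (add_neg_cancel N')).trans (smul_zero _))
  have hdet : (U * V).det = (V * U).det := by
    rw [det_mul, det_mul, mul_comm]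
  rw [hUV, hVU, det_fromBlocks_zero₂₁, det_fromBlocks_zero₂₁] at hdet
  have hXn : ((X : R) • (1 : Matrix (Fin n) (Fin n) R)).det = (X : R) ^ n := by
    rw [det_smul, det_one, mul_one, Fintype.card_fin]
  rw [hXn] at hdet
  have hX : ((X : R) ^ n) ≠ 0 := pow_ne_zero _ X_ne_zero
  have h1 : dpoly n (M * N) * (X : R) ^ n = (X : R) ^ n * dpoly n (N * M) := by
    rw [dpoly, dpoly, Matrix.map_mul, Matrix.map_mul]
    exact hdet
  rw [mul_comm] at h1
  exact mul_left_cancel₀ hX h1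

open Polynomial in
/-- Auxiliary polynomial of a Hermitian matrix via its eigenvalues. -/
theorem dpoly_hermitian {n : ℕ} {A : Matrix (Fin n) (Fin n) ℝ} (hA : A.IsHermitian) :
    dpoly n A = ∏ i, ((X : ℝ[X]) + C (hA.eigenvalues i)) := by
  set R := (Polynomial ℝ)
  set U : Matrix (Fin n) (Fin n) ℝ := (hA.eigenvectorUnitary : Matrix (Fin n) (Fin n) ℝ) with hUdef
  have hU1 : U * star U = 1 := mem_unitaryGroup_iff.mp hA.eigenvectorUnitary.2
  have hspec : A = U * diagonal (RCLike.ofReal ∘ hA.eigenvalues) * star U := hA.spectral_theorem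
  have hdiag : diagonal (RCLike.ofReal ∘ hA.eigenvalues) = diagonal hA.eigenvalues := by
    simp [RCLike.ofReal_real_eq_id]
  rw [hdiag] at hspec
  set U' : Matrix (Fin n) (Fin n) R := U.map C with hU'
  set sU' : Matrix (Fin n) (Fin n) R := (star U).map C with hsU'
  have key : (X : R) • (1 : Matrix (Fin n) (Fin n) R) + A.map C
      = U' * (diagonal (fun i => (X : R) + C (hA.eigenvalues i))) * sU' := by
    have hd : diagonal (fun i => (X : R) + C (hA.eigenvalues i))
        = (X : R) • (1 : Matrix (Fin n) (Fin n) R) + (diagonal hA.eigenvalues).map C := by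
      rw [smul_one_eq_diagonal, diagonal_map (map_zero C), ← diagonal_add]
    rw [hd, Matrix.mul_add, Matrix.add_mul]
    congr 1
    · rw [Matrix.mul_smul, Matrix.smul_mul, mul_one, ← Matrix.map_mul, hU1,
        Matrix.map_one C (map_zero C) (map_one C)]
    · conv_lhs => rw [hspec]
      rw [Matrix.map_mul, Matrix.map_mul]
  have hU'det : U'.det * sU'.det = 1 := by
    rw [← det_mul, ← Matrix.map_mul, hU1, Matrix.map_one C (map_zero C) (map_one C), det_one]
  rw [dpoly, key, det_mul, det_mul, mul_right_comm, hU'det, one_mul, det_diagonal]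

open Polynomial in
/-- The elementary symmetric functions of the eigenvalues of a Hermitian matrix are
coefficients of the auxiliary polynomial. -/
theorem esymm_eq_dpoly_coeff {n k : ℕ} (hkn : k ≤ n) {A : Matrix (Fin n) (Fin n) ℝ}
    (hA : A.IsHermitian) :
    esymm n k hA.eigenvalues = (dpoly n A).coeff (n - k) := by
  rw [esymm, dpoly_hermitian hA]
  rw [Finset.prod_X_add_C_coeff Finset.univ hA.eigenvalues (by simp [Nat.sub_le n k])]
  congr 1
  simp [Nat.sub_sub_self hkn]

open Polynomial in
/-- The auxiliary polynomial written as a sum over principal minors. -/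
theorem dpoly_eq_sum_minors (n : ℕ) (A : Matrix (Fin n) (Fin n) ℝ) :
    dpoly n A = ∑ s : Finset (Fin n),
      C ((A.submatrix (Subtype.val : {i // i ∈ s} → Fin n) Subtype.val).det)
        * (X : ℝ[X]) ^ (n - s.card) := by
  classical
  set R := (Polynomial ℝ)
  set A' : Matrix (Fin n) (Fin n) R := A.map C with hA'
  set I' : Matrix (Fin n) (Fin n) R := (X : R) • 1 with hI'
  have h0 : dpoly n A = Matrix.det (A' + I') := by
    rw [dpoly, add_comm]
  have hexp : Matrix.det (A' + I')
      = ∑ s : Finset (Fin n), Matrix.det (s.piecewise A' I') := by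
    exact (Matrix.detRowAlternating (R := R) (n := Fin n)).toMultilinearMap.map_add_univ A' I'
  rw [h0, hexp]
  refine Finset.sum_congr rfl fun s _ => ?_
  set e : {i // i ∈ s} ⊕ {i // ¬ i ∈ s} ≃ Fin n := Equiv.sumCompl (· ∈ s) with he
  have he1 : ∀ i : {i // i ∈ s}, e (Sum.inl i) = (i : Fin n) := fun i => rfl
  have he2 : ∀ i : {i // ¬ i ∈ s}, e (Sum.inr i) = (i : Fin n) := fun i => rfl
  have hsub : Matrix.det (s.piecewise A' I')
      = Matrix.det (Matrix.submatrix (s.piecewise A' I') e e) :=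
    (Matrix.det_submatrix_equiv_self e _).symm
  have hblock : Matrix.submatrix (s.piecewise A' I') e e
      = fromBlocks (A'.submatrix (Subtype.val : {i // i ∈ s} → Fin n) Subtype.val)
          (A'.submatrix Subtype.val Subtype.val) 0 ((X : R) • 1) := by
    apply Matrix.ext
    rintro (i | i) (j | j)
    · show (s.piecewise A' I') (e (Sum.inl i)) (e (Sum.inl j)) = A' (i : Fin n) (j : Fin n)
      rw [he1, he1]
      dsimp only [Finset.piecewise]
      rw [if_pos i.2]
    · show (s.piecewise A' I') (e (Sum.inl i)) (e (Sum.inr j)) = A' (i : Fin n) (j : Fin n)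
      rw [he1, he2]
      dsimp only [Finset.piecewise]
      rw [if_pos i.2]
    · show (s.piecewise A' I') (e (Sum.inr i)) (e (Sum.inl j)) = 0
      rw [he2, he1]
      dsimp only [Finset.piecewise]
      rw [if_neg i.2]
      have hne : (i : Fin n) ≠ (j : Fin n) := fun h => i.2 (h ▸ j.2)
      rw [hI']
      simp [Matrix.one_apply, hne]
    · show (s.piecewise A' I') (e (Sum.inr i)) (e (Sum.inr j))
        = ((X : R) • (1 : Matrix {i // ¬ i ∈ s} {i // ¬ i ∈ s} R)) i j
      rw [he2, he2]
      dsimp only [Finset.piecewise]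
      rw [if_neg i.2, hI']
      simp only [Matrix.smul_apply, Matrix.one_apply, Subtype.val_inj]
  have hcard : Fintype.card {i // ¬ i ∈ s} = n - s.card := by
    rw [Fintype.card_subtype_compl]
    simp [Fintype.card_coe]
  rw [hsub, hblock, det_fromBlocks_zero₂₁, det_smul, det_one, mul_one, hcard]
  congr 1
  rw [hA', Matrix.submatrix_map]
  exact (RingHom.map_det (C : ℝ →+* ℝ[X]) (A.submatrix Subtype.val Subtype.val)).symm

open Polynomial in
/-- Coefficient of the auxiliary polynomial as a sum of `k × k` principal minors. -/
theorem dpoly_coeff_eq_sum_minors {n k : ℕ} (hkn : k ≤ n) (A : Matrix (Fin n) (Fin n) ℝ) :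
    (dpoly n A).coeff (n - k) = ∑ s ∈ Finset.powersetCard k (Finset.univ : Finset (Fin n)),
      (A.submatrix (Subtype.val : {i // i ∈ s} → Fin n) Subtype.val).det := by
  classical
  rw [dpoly_eq_sum_minors, finset_sum_coeff]
  simp_rw [coeff_C_mul_X_pow]
  rw [Finset.powersetCard_eq_filter, ← Finset.powerset_univ, Finset.sum_filter]
  refine Finset.sum_congr rfl fun s _ => ?_
  have hs : s.card ≤ n := by
    simpa using Finset.card_le_card (Finset.subset_univ s)
  congr 1
  simp only [eq_iff_iff]
  constructor
  · intro h; omega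
  · intro h; omega

/-- A positive semidefinite real matrix has nonnegative determinant. -/
theorem psd_det_nonneg {m : Type*} [Fintype m] [DecidableEq m] {A : Matrix m m ℝ} (hA : A.PosSemidef) :
    0 ≤ A.det := by
  rw [hA.isHermitian.det_eq_prod_eigenvalues]
  exact Finset.prod_nonneg fun i _ => hA.eigenvalues_nonneg i

/-- `det (1 + D) ≥ 1` for positive semidefinite `D`. -/
theorem det_one_add_psd {m : Type*} [Fintype m] [DecidableEq m] {D : Matrix m m ℝ} (hD : D.PosSemidef) :
    1 ≤ (1 + D).det := by
  set hH := hD.isHermitian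
  set U : Matrix m m ℝ := (hH.eigenvectorUnitary : Matrix m m ℝ) with hU
  have hU1 : U * star U = 1 := mem_unitaryGroup_iff.mp hH.eigenvectorUnitary.2
  have hspec : D = U * diagonal hH.eigenvalues * star U := by
    have := hH.spectral_theorem
    simpa [RCLike.ofReal_real_eq_id] using this
  have key : (1 : Matrix m m ℝ) + D
      = U * diagonal (fun i => 1 + hH.eigenvalues i) * star U := by
    have : diagonal (fun i => (1 : ℝ) + hH.eigenvalues i)
        = 1 + diagonal hH.eigenvalues := by
      rw [← diagonal_one, ← diagonal_add]
    rw [this, Matrix.mul_add, Matrix.add_mul, Matrix.mul_one, hU1, ← hspec]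
  rw [key, det_mul, det_mul, mul_right_comm, ← det_mul, hU1, det_one, one_mul, det_diagonal]
  calc (1:ℝ) = ∏ _i : m, 1 := by simp
  _ ≤ ∏ i, (1 + hH.eigenvalues i) := by
      refine Finset.prod_le_prod (fun i _ => by norm_num) fun i _ => ?_
      linarith [hD.eigenvalues_nonneg i]

open scoped MatrixOrder in
noncomputable def Matrix.PosSemidef.sqrt {m : Type*} [Fintype m] [DecidableEq m] {A : Matrix m m ℝ}
    (_hA : A.PosSemidef) : Matrix m m ℝ := CFC.sqrt A

open scoped MatrixOrder in
theorem Matrix.PosSemidef.posSemidef_sqrt {m : Type*} [Fintype m] [DecidableEq m]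
    {A : Matrix m m ℝ} (hA : A.PosSemidef) : hA.sqrt.PosSemidef :=
  Matrix.nonneg_iff_posSemidef.mp (CFC.sqrt_nonneg A)

open scoped MatrixOrder in
theorem Matrix.PosSemidef.sqrt_mul_self {m : Type*} [Fintype m] [DecidableEq m]
    {A : Matrix m m ℝ} (hA : A.PosSemidef) : hA.sqrt * hA.sqrt = A :=
  CFC.sqrt_mul_sqrt_self A (Matrix.nonneg_iff_posSemidef.mpr hA)

/-- Monotonicity of the determinant in the Loewner order on PSD matrices. -/
theorem det_mono_psd {m : Type*} [Fintype m] [DecidableEq m] {A B : Matrix m m ℝ}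
    (hA : A.PosSemidef) (hBA : (B - A).PosSemidef) : A.det ≤ B.det := by
  by_cases hdet : A.det = 0
  · rw [hdet]
    have hB : B.PosSemidef := by
      have := hA.add hBA
      simpa using this
    exact psd_det_nonneg hB
  · set S := hA.sqrt with hS
    have hSpsd : S.PosSemidef := hA.posSemidef_sqrt
    have hSS : S * S = A := hA.sqrt_mul_self
    have hSdet : S.det ≠ 0 := by
      intro h
      apply hdet
      rw [← hSS, det_mul, h, zero_mul]
    have hSunit : IsUnit S.det := isUnit_iff_ne_zero.mpr hSdet
    have hinv1 : S * S⁻¹ = 1 := mul_nonsing_inv S hSunit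
    have hinv2 : S⁻¹ * S = 1 := nonsing_inv_mul S hSunit
    have hinvH : S⁻¹.conjTranspose = S⁻¹ := by
      rw [conjTranspose_nonsing_inv, hSpsd.isHermitian.eq]
    set M : Matrix m m ℝ := S⁻¹ * (B - A) * S⁻¹ with hM
    have hMpsd : M.PosSemidef := by
      have := hBA.conjTranspose_mul_mul_same (B := S⁻¹)
      rwa [hinvH] at this
    have key : S * (1 + M) * S = B := by
      rw [hM, Matrix.mul_add, Matrix.mul_one, Matrix.add_mul]
      rw [show S * (S⁻¹ * (B - A) * S⁻¹) * S = (S * S⁻¹) * (B - A) * (S⁻¹ * S) from by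
        simp only [Matrix.mul_assoc]]
      rw [hinv1, hinv2, Matrix.one_mul, Matrix.mul_one, hSS]
      abel
    have hAd : A.det = S.det * S.det := by rw [← hSS, det_mul]
    have hBd : B.det = A.det * (1 + M).det := by
      rw [← key, det_mul, det_mul, hAd]
      ring
    rw [hBd]
    have h1 := det_one_add_psd hMpsd
    have h0 := psd_det_nonneg hA
    nlinarith

/-- Monotonicity of the minor-sum coefficients in the Loewner order. -/
theorem dpoly_coeff_mono {n k : ℕ} (hkn : k ≤ n) {A B : Matrix (Fin n) (Fin n) ℝ}
    (hA : A.PosSemidef) (hBA : (B - A).PosSemidef) :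
    (dpoly n A).coeff (n - k) ≤ (dpoly n B).coeff (n - k) := by
  refine le_trans (le_of_eq (dpoly_coeff_eq_sum_minors hkn A))
    (le_trans ?_ (le_of_eq (dpoly_coeff_eq_sum_minors hkn B).symm))
  refine Finset.sum_le_sum fun s _ => ?_
  have h1 := hA.submatrix (Subtype.val : {i // i ∈ s} → Fin n)
  have h2 := hBA.submatrix (Subtype.val : {i // i ∈ s} → Fin n)
  rw [Matrix.submatrix_sub] at h2
  exact det_mono_psd h1 h2

theorem psd_smul' {n : ℕ} {A : Matrix (Fin n) (Fin n) ℝ} {c : ℝ} (hc : 0 ≤ c)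
    (hA : A.PosSemidef) : (c • A).PosSemidef := by
  rw [posSemidef_iff_dotProduct_mulVec]
  constructor
  · show (c • A)ᴴ = c • A
    rw [conjTranspose_smul, hA.1.eq, star_trivial]
  · intro x
    rw [smul_mulVec, dotProduct_smul, smul_eq_mul]
    exact mul_nonneg hc (hA.dotProduct_mulVec_nonneg x)

theorem vecMulVec_hermitian {n : ℕ} (p : Fin n → ℝ) :
    (vecMulVec p p).IsHermitian := by
  show (vecMulVec p p)ᴴ = vecMulVec p p
  ext i j
  simp [conjTranspose_apply, vecMulVec_apply, mul_comm]

theorem vecMulVec_mulVec {n : ℕ} (p x : Fin n → ℝ) :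
    vecMulVec p p *ᵥ x = (p ⬝ᵥ x) • p := by
  ext i
  simp only [Matrix.mulVec, Matrix.vecMulVec_apply, dotProduct, Pi.smul_apply, smul_eq_mul,
    Finset.sum_mul]
  exact Finset.sum_congr rfl fun j _ => by ring

theorem vecMulVec_psd {n : ℕ} (p : Fin n → ℝ) : (vecMulVec p p).PosSemidef := by
  refine posSemidef_iff_dotProduct_mulVec.mpr ⟨vecMulVec_hermitian p, fun x => ?_⟩
  have hx : star x = x := funext fun i => star_trivial _
  rw [hx, vecMulVec_mulVec, dotProduct_smul, smul_eq_mul, dotProduct_comm]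
  exact mul_self_nonneg _

theorem psd_PK {n : ℕ} (p : Fin n → ℝ) :
    ((∑ i, p i ^ 2) • (1 : Matrix (Fin n) (Fin n) ℝ) - vecMulVec p p).PosSemidef := by
  rw [posSemidef_iff_dotProduct_mulVec]
  constructor
  · show _ᴴ = _
    rw [conjTranspose_sub, conjTranspose_smul, conjTranspose_one, (vecMulVec_hermitian p).eq,
      star_trivial]
  · intro x
    have hx : star x = x := funext fun i => star_trivial _
    rw [hx, sub_mulVec, dotProduct_sub, smul_mulVec, one_mulVec, dotProduct_smul,
      vecMulVec_mulVec, dotProduct_smul, smul_eq_mul, smul_eq_mul, dotProduct_comm x p]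
    have hcs := Finset.sum_mul_sq_le_sq_mul_sq Finset.univ p x
    have h1 : x ⬝ᵥ x = ∑ i, x i ^ 2 := by
      simp [dotProduct, sq]
    have h2 : p ⬝ᵥ x = ∑ i, p i * x i := rfl
    rw [h1, h2]
    nlinarith

/-- With `q(t) = √(u²+t²)`, `w̃(t) = √(u²+t²+|p|²)`,
`γ̃(t) = I − p pᵀ/(w̃(t)(q(t)+w̃(t)))` and `a(t) = (q(t)/w̃(t)) γ̃(t) H γ̃(t)`
for a symmetric positive semidefinite `H`, the function
`t ↦ σ_k(λ(a(t)))` is nondecreasing on `[0, ∞)` for each `1 ≤ k ≤ n`. -/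
theorem stmt_13 (n : ℕ) (hn : 1 ≤ n) (u : ℝ) (hu : 0 < u) (p : Fin n → ℝ)
    (H : Matrix (Fin n) (Fin n) ℝ) (hH : H.PosSemidef)
    (q W : ℝ → ℝ)
    (hq : ∀ t, q t = Real.sqrt (u ^ 2 + t ^ 2))
    (hW : ∀ t, W t = Real.sqrt (u ^ 2 + t ^ 2 + ∑ i, p i ^ 2))
    (γ : ℝ → Matrix (Fin n) (Fin n) ℝ)
    (hγ : ∀ t, γ t = 1 - (W t * (q t + W t))⁻¹ • Matrix.vecMulVec p p)
    (a : ℝ → Matrix (Fin n) (Fin n) ℝ)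
    (ha : ∀ t, a t = (q t / W t) • (γ t * H * γ t))
    (hherm : ∀ t, (a t).IsHermitian)
    (k : ℕ) (hk1 : 1 ≤ k) (hkn : k ≤ n) :
    MonotoneOn (fun t => esymm n k (hherm t).eigenvalues) (Set.Ici 0) := by
  classical
  intro t₁ ht₁ t₂ ht₂ h12
  simp only [Set.mem_Ici] at ht₁ ht₂
  simp only
  set P : ℝ := ∑ i, p i ^ 2 with hPdef
  have hP0 : 0 ≤ P := Finset.sum_nonneg fun i _ => sq_nonneg _
  have hut : ∀ t : ℝ, (0:ℝ) < u ^ 2 + t ^ 2 :=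
    fun t => add_pos_of_pos_of_nonneg (pow_pos hu 2) (sq_nonneg t)
  have hutP : ∀ t : ℝ, (0:ℝ) < u ^ 2 + t ^ 2 + P :=
    fun t => add_pos_of_pos_of_nonneg (hut t) hP0
  have hq0 : ∀ t : ℝ, 0 < q t := fun t => by
    rw [hq]; exact Real.sqrt_pos.mpr (hut t)
  have hW0 : ∀ t : ℝ, 0 < W t := fun t => by
    rw [hW]; exact Real.sqrt_pos.mpr (hutP t)
  have hq2 : ∀ t : ℝ, q t ^ 2 = u ^ 2 + t ^ 2 := fun t => by
    rw [hq]; exact Real.sq_sqrt (hut t).le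
  have hW2 : ∀ t : ℝ, W t ^ 2 = u ^ 2 + t ^ 2 + P := fun t => by
    rw [hW]; exact Real.sq_sqrt (hutP t).le
  set c : ℝ → ℝ := fun t => q t / W t with hcdef
  have hct : ∀ t, c t = q t / W t := fun t => rfl
  have hc0 : ∀ t, 0 < c t := fun t => div_pos (hq0 t) (hW0 t)
  have ht12sq : t₁ ^ 2 ≤ t₂ ^ 2 := pow_le_pow_left₀ ht₁ h12 2
  have hc12 : c t₁ ≤ c t₂ := by
    rw [hct, hct, div_le_div_iff₀ (hW0 t₁) (hW0 t₂)]
    calc q t₁ * W t₂ = Real.sqrt ((u^2 + t₁^2) * (u^2 + t₂^2 + P)) := by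
          rw [hq, hW]
          exact (Real.sqrt_mul (hut t₁).le _).symm
    _ ≤ Real.sqrt ((u^2 + t₂^2) * (u^2 + t₁^2 + P)) := Real.sqrt_le_sqrt (by nlinarith)
    _ = q t₂ * W t₁ := by
          rw [hq, hW]
          exact Real.sqrt_mul (hut t₂).le _
  set S : Matrix (Fin n) (Fin n) ℝ := hH.sqrt with hSdef
  have hSH : S.IsHermitian := hH.posSemidef_sqrt.isHermitian
  have hSS : S * S = H := hH.sqrt_mul_self
  have hKK : vecMulVec p p * vecMulVec p p = P • vecMulVec p p := by
    apply Matrix.ext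
    intro i j
    simp only [Matrix.mul_apply, vecMulVec_apply, Matrix.smul_apply, smul_eq_mul, hPdef,
      Finset.sum_mul]
    exact Finset.sum_congr rfl fun l _ => by ring
  have hγH : ∀ t, (γ t).IsHermitian := fun t => by
    rw [hγ]
    show _ᴴ = _
    rw [conjTranspose_sub, conjTranspose_smul, conjTranspose_one,
      (vecMulVec_hermitian p).eq, star_trivial]
  have hγsq : ∀ t, γ t * γ t
      = 1 - (W t ^ 2)⁻¹ • vecMulVec p p := by
    intro t
    have h1 : W t ≠ 0 := (hW0 t).ne'
    have h2 : q t + W t ≠ 0 := (add_pos (hq0 t) (hW0 t)).ne'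
    have hr : 2 * (W t * (q t + W t))⁻¹
        - (W t * (q t + W t))⁻¹ * (W t * (q t + W t))⁻¹ * P = (W t ^ 2)⁻¹ := by
      have hPeq : P = W t ^ 2 - q t ^ 2 := by rw [hW2, hq2]; ring
      rw [hPeq]
      field_simp
      ring
    set r : ℝ := (W t * (q t + W t))⁻¹ with hrdef
    rw [hγ]
    have hexp : ((1 : Matrix (Fin n) (Fin n) ℝ) - r • vecMulVec p p) * (1 - r • vecMulVec p p)
        = 1 - r • vecMulVec p p - r • vecMulVec p p
          + (r • vecMulVec p p) * (r • vecMulVec p p) := by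
      rw [Matrix.sub_mul, Matrix.one_mul, Matrix.mul_sub, Matrix.mul_one]
      abel
    rw [hexp, Matrix.smul_mul, Matrix.mul_smul, hKK, smul_smul, smul_smul, ← hr]
    module
  have hMpsd : (S * vecMulVec p p * S).PosSemidef := by
    have := (vecMulVec_psd p).conjTranspose_mul_mul_same (B := S)
    rwa [hSH.eq] at this
  have hfact : ∀ t, (c t • (S * γ t)) * (γ t * S)
      = c t • H - (c t * (W t ^ 2)⁻¹) • (S * vecMulVec p p * S) := by
    intro t
    have h1 : (S * γ t) * (γ t * S) = H - (W t ^ 2)⁻¹ • (S * vecMulVec p p * S) := by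
      rw [show (S * γ t) * (γ t * S) = S * (γ t * γ t) * S from by
        simp only [Matrix.mul_assoc]]
      rw [hγsq t, Matrix.mul_sub, Matrix.mul_one, Matrix.sub_mul, Matrix.mul_smul,
        Matrix.smul_mul, hSS]
    rw [Matrix.smul_mul, h1, smul_sub, smul_smul]
  have hafact : ∀ t, a t = (γ t * S) * (c t • (S * γ t)) := by
    intro t
    rw [ha, mul_smul_comm]
    congr 1
    rw [← hSS]
    simp only [Matrix.mul_assoc]
  set b : ℝ → Matrix (Fin n) (Fin n) ℝ :=
    fun t => c t • H - (c t * (W t ^ 2)⁻¹) • (S * vecMulVec p p * S) with hbdef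
  have hbt : ∀ t, b t = c t • H - (c t * (W t ^ 2)⁻¹) • (S * vecMulVec p p * S) :=
    fun t => rfl
  have hdp : ∀ t, dpoly n (a t) = dpoly n (b t) := by
    intro t
    rw [hafact t, dpoly_mul_comm, hfact t, hbt]
  have hbpsd : ∀ t, (b t).PosSemidef := by
    intro t
    have h3 : (γ t * S)ᴴ = S * γ t := by
      rw [conjTranspose_mul, hSH.eq, (hγH t).eq]
    have h2 : b t = c t • ((γ t * S)ᴴ * (γ t * S)) := by
      rw [h3, hbt, ← hfact t, Matrix.smul_mul]
    rw [h2]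
    exact psd_smul' (hc0 t).le (posSemidef_conjTranspose_mul_self _)
  have hPHM : (P • H - S * vecMulVec p p * S).PosSemidef := by
    have h1 := (psd_PK p).conjTranspose_mul_mul_same (B := S)
    rw [hSH.eq] at h1
    have h2 : S * ((∑ i, p i ^ 2) • (1 : Matrix (Fin n) (Fin n) ℝ) - vecMulVec p p) * S
        = P • H - S * vecMulVec p p * S := by
      rw [← hPdef, Matrix.mul_sub, Matrix.sub_mul, mul_smul_comm, Matrix.mul_one,
        Matrix.smul_mul, hSS]
    rwa [h2] at h1
  have hc3 : ∀ t, c t - (c t * (W t ^ 2)⁻¹) * P = c t ^ 3 := by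
    intro t
    have hPeq : P = W t ^ 2 - q t ^ 2 := by rw [hW2, hq2]; ring
    have h1 : W t ≠ 0 := (hW0 t).ne'
    rw [hct, hPeq]
    field_simp
    ring
  have hdiff : (b t₂ - b t₁).PosSemidef := by
    rcases le_or_gt (c t₂ * (W t₂ ^ 2)⁻¹) (c t₁ * (W t₁ ^ 2)⁻¹) with hd | hd
    · have he : b t₂ - b t₁ = (c t₂ - c t₁) • H
          + (c t₁ * (W t₁ ^ 2)⁻¹ - c t₂ * (W t₂ ^ 2)⁻¹) • (S * vecMulVec p p * S) := by
        rw [hbt, hbt]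
        module
      rw [he]
      exact (psd_smul' (by linarith) hH).add (psd_smul' (by linarith) hMpsd)
    · have he : b t₂ - b t₁ = (c t₂ ^ 3 - c t₁ ^ 3) • H
          + (c t₂ * (W t₂ ^ 2)⁻¹ - c t₁ * (W t₁ ^ 2)⁻¹) • (P • H - S * vecMulVec p p * S) := by
        rw [hbt, hbt, show c t₂ ^ 3 - c t₁ ^ 3
          = (c t₂ - c t₁) - (c t₂ * (W t₂ ^ 2)⁻¹ - c t₁ * (W t₁ ^ 2)⁻¹) * P from by
            rw [← hc3 t₁, ← hc3 t₂]; ring]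
        module
      rw [he]
      have hc33 : c t₁ ^ 3 ≤ c t₂ ^ 3 := pow_le_pow_left₀ (hc0 t₁).le hc12 3
      exact (psd_smul' (by linarith) hH).add (psd_smul' (by linarith) hPHM)
  rw [esymm_eq_dpoly_coeff hkn (hherm t₁), esymm_eq_dpoly_coeff hkn (hherm t₂),
    hdp t₁, hdp t₂]
  exact dpoly_coeff_mono hkn (hbpsd t₁) hdiff
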